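/- Suppose for every i ∈ {1,…,k} the autoencoder (E_i, D_i) is optimal. Let (i_1, …, i_ℓ) with ℓ ≥ 2 be any sequence of domain indices. Define the chained transport by x_1 := x and x_{m+1} := D_{i_{m+1}}(π^Z(E_{i_m}(x_m)), n_{m+1}) for m = 1,…,ℓ−1. Then the pushforward of P_{X_{i_1}} ⊗ P_{N_{i_2}} ⊗ ⋯ ⊗ P_{N_{i_ℓ}} under the map (x, n_2, …, n_ℓ) ↦ (x, x_ℓ) equals the pushforward of P_{X_{i_1}} ⊗ P_{N_{i_ℓ}} under the map (x, n) ↦ (x, D_{i_ℓ}(π^Z(E_{i_1}(x)), n)). Equivalently, every sequence of encodings and decodings starting in domain i_1 and ending in domain i_ℓ induces the same joint distribution of input and output as the direct one-step translation (path consistency). -/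

import Mathlib

open MeasureTheory

lemma map_eval_pi_prob {ι : Type*} [Fintype ι] [DecidableEq ι] {α : ι → Type*}
    [∀ i, MeasurableSpace (α i)] (μ : ∀ i, Measure (α i)) [∀ i, IsProbabilityMeasure (μ i)]
    (i : ι) : (Measure.pi μ).map (Function.eval i) = μ i := by
  ext s hs
  rw [Measure.map_apply (measurable_pi_apply i) hs, Set.eval_preimage, Measure.pi_pi]
  rw [Finset.prod_eq_single i (fun j _ hj => by simp [Function.update_of_ne hj]) (by simp)]
  simp

lemma measurePreserving_snocFun {n : ℕ} {α : ℕ → Type*} [∀ i, MeasurableSpace (α i)]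
    (μ : ∀ i, Measure (α i)) [∀ i, IsProbabilityMeasure (μ i)] :
    MeasurePreserving
      (fun p : (∀ i : Fin n, α i) × α n => (Fin.snoc p.1 p.2 : ∀ i : Fin (n + 1), α i))
      ((Measure.pi fun i : Fin n => μ i).prod (μ n)) (Measure.pi fun i : Fin (n + 1) => μ i) := by
  have hmeas : Measurable
      (fun p : (∀ i : Fin n, α i) × α n => (Fin.snoc p.1 p.2 : ∀ i : Fin (n + 1), α i)) := by
    rw [measurable_pi_iff]
    intro i
    induction i using Fin.lastCases with
    | last => simp only [Fin.snoc_last]; exact measurable_snd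
    | cast j => simp only [Fin.snoc_castSucc]; exact (measurable_pi_apply j).comp measurable_fst
  refine ⟨hmeas, ?_⟩
  refine (Measure.pi_eq fun s hs => ?_).symm
  rw [Measure.map_apply hmeas (MeasurableSet.univ_pi hs)]
  have hpre : (fun p : (∀ i : Fin n, α i) × α n =>
        (Fin.snoc p.1 p.2 : ∀ i : Fin (n + 1), α i)) ⁻¹' (Set.pi Set.univ s)
      = (Set.pi Set.univ fun j : Fin n => (s j.castSucc : Set (α j))) ×ˢ (s (Fin.last n)) := by
    ext ⟨f, a⟩
    simp only [Set.mem_preimage, Set.mem_univ_pi, Fin.forall_fin_succ', Fin.snoc_castSucc,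
      Fin.snoc_last, Set.mem_prod]
  rw [hpre, Measure.prod_prod, Measure.pi_pi, Fin.prod_univ_castSucc]
  rfl

lemma latent_marginal {X Z N : Type*} [MeasurableSpace X] [MeasurableSpace Z] [MeasurableSpace N]
    (PX : Measure X) (PZ : Measure Z) (PN : Measure N) [IsProbabilityMeasure PN]
    [SFinite PZ]
    (E : X → Z × N) (hE : Measurable E) (hlat : PX.map E = PZ.prod PN) :
    PX.map (fun x => (E x).1) = PZ := by
  have h : (fun x => (E x).1) = Prod.fst ∘ E := rfl
  rw [h, ← Measure.map_map measurable_fst hE, hlat, Measure.map_fst_prod]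
  simp

lemma measurableSet_eq_of_standardBorel {A Z : Type*} [MeasurableSpace A] [MeasurableSpace Z]
    [StandardBorelSpace Z] {f g : A → Z} (hf : Measurable f) (hg : Measurable g) :
    MeasurableSet {a | f a = g a} := by
  letI := upgradeStandardBorel Z
  exact hf.stronglyMeasurable.measurableSet_eq_fun hg.stronglyMeasurable

lemma section_ae {X Z N : Type*} [MeasurableSpace X] [MeasurableSpace Z] [StandardBorelSpace Z]
    [MeasurableSpace N] (PX : Measure X) (PZ : Measure Z) (PN : Measure N)
    (E : X → Z × N) (D : Z × N → X) (hE : Measurable E) (hD : Measurable D)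
    (hrec : ∀ᵐ x ∂PX, D (E x) = x) (hlat : PX.map E = PZ.prod PN) :
    ∀ᵐ p ∂PZ.prod PN, (E (D p)).1 = p.1 := by
  rw [← hlat]
  have hmeas : MeasurableSet {p : Z × N | (E (D p)).1 = p.1} :=
    measurableSet_eq_of_standardBorel ((hE.comp hD).fst) measurable_fst
  rw [ae_map_iff hE.aemeasurable hmeas]
  filter_upwards [hrec] with x hx
  rw [hx]

lemma ae_prod_fst {X Y : Type*} [MeasurableSpace X] [MeasurableSpace Y]
    (μ : Measure X) (ν : Measure Y) [SFinite ν]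
    {p : X → Prop} (_hp : MeasurableSet {x | p x}) (h : ∀ᵐ x ∂μ, p x) :
    ∀ᵐ q ∂μ.prod ν, p q.1 := by
  rw [ae_iff] at h ⊢
  have heq : {q : X × Y | ¬ p q.1} = {x | ¬ p x} ×ˢ Set.univ := by ext q; simp
  rw [heq, Measure.prod_prod, h, zero_mul]

/-- The chained transport along a sequence of domains `s 0, s 1, …`:
`x_0 := x` and `x_{m+1} := D_{s(m+1)}(π^Z(E_{s m}(x_m)), n_{m+1})`. -/
def chainTransport {k : ℕ} {X : Fin k → Type*} {Z : Type*} {N : Fin k → Type*}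
    (E : ∀ i, X i → Z × N i) (D : ∀ i, Z × N i → X i)
    (s : ℕ → Fin k) (x : X (s 0)) :
    (T : ℕ) → (n : ∀ m : Fin T, N (s (m + 1))) → X (s T)
  | 0, _ => x
  | T + 1, n =>
      D (s (T + 1))
        ((E (s T) (chainTransport E D s x T fun m => n m.castSucc)).1, n (Fin.last T))

/-- Path consistency: if every autoencoder `(E i, D i)` is optimal (zero reconstruction loss and
encoded distribution `E i # P_{X i} = P_Z ⊗ P_{N i}`), then for any sequence of domain indices
`(s 0, …, s (L+1))` of length `ℓ = L + 2 ≥ 2`, the joint distribution of `(x, x_ℓ)` under the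
chained transport — the pushforward of `P_{X_{s 0}} ⊗ P_{N_{s 1}} ⊗ ⋯ ⊗ P_{N_{s (L+1)}}` —
equals the joint distribution of input and output of the direct one-step translation, the
pushforward of `P_{X_{s 0}} ⊗ P_{N_{s (L+1)}}` under `(x, n) ↦ (x, D_{s(L+1)}(π^Z(E_{s 0} x), n))`. -/
theorem path_consistency {k : ℕ}
    (X : Fin k → Type*) [∀ i, MeasurableSpace (X i)] [∀ i, StandardBorelSpace (X i)]
    (Z : Type*) [MeasurableSpace Z] [StandardBorelSpace Z]
    (N : Fin k → Type*) [∀ i, MeasurableSpace (N i)] [∀ i, StandardBorelSpace (N i)]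
    (PX : ∀ i, Measure (X i)) [∀ i, IsProbabilityMeasure (PX i)]
    (PZ : Measure Z) [IsProbabilityMeasure PZ]
    (PN : ∀ i, Measure (N i)) [∀ i, IsProbabilityMeasure (PN i)]
    (E : ∀ i, X i → Z × N i) (D : ∀ i, Z × N i → X i)
    (hE : ∀ i, Measurable (E i)) (hD : ∀ i, Measurable (D i))
    (hrec : ∀ i, ∀ᵐ x ∂(PX i), D i (E i x) = x)
    (hlat : ∀ i, (PX i).map (E i) = PZ.prod (PN i))
    (L : ℕ) (s : ℕ → Fin k) :
    Measure.map
      (fun p : X (s 0) × (∀ m : Fin (L + 1), N (s (m + 1))) =>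
        (p.1, chainTransport E D s p.1 (L + 1) p.2))
      ((PX (s 0)).prod (Measure.pi fun m : Fin (L + 1) => PN (s (m + 1))))
    = Measure.map
        (fun p : X (s 0) × N (s (L + 1)) => (p.1, D (s (L + 1)) ((E (s 0) p.1).1, p.2)))
        ((PX (s 0)).prod (PN (s (L + 1)))) := by
  have hchain : ∀ T : ℕ, Measurable
      (fun p : X (s 0) × (∀ m : Fin T, N (s (m + 1))) => chainTransport E D s p.1 T p.2) := by
    intro T
    induction T with
    | zero => exact measurable_fst
    | succ T ihT =>
      have h1 : Measurable (fun p : X (s 0) × (∀ m : Fin (T + 1), N (s (m + 1))) =>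
          (p.1, fun m : Fin T => p.2 m.castSucc)) :=
        measurable_fst.prodMk (measurable_pi_iff.2 fun m =>
          (measurable_pi_apply _).comp measurable_snd)
      have h2 : Measurable (fun p : X (s 0) × (∀ m : Fin (T + 1), N (s (m + 1))) =>
          chainTransport E D s p.1 T (fun m => p.2 m.castSucc)) := ihT.comp h1
      exact (hD _).comp ((((hE _).comp h2).fst).prodMk
        ((measurable_pi_apply (Fin.last T)).comp measurable_snd))
  induction L with
  | zero =>
    have hG : Measurable (fun q : X (s 0) × N (s 1) => (q.1, D (s 1) ((E (s 0) q.1).1, q.2))) :=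
      measurable_fst.prodMk ((hD _).comp ((((hE _).comp measurable_fst).fst).prodMk
        measurable_snd))
    have hproj : Measurable (Prod.map (id : X (s 0) → X (s 0))
        (Function.eval (Fin.last 0) : (∀ m : Fin 1, N (s (m + 1))) → N (s 1))) :=
      measurable_id.prodMap (measurable_pi_apply _)
    have hF : (fun p : X (s 0) × (∀ m : Fin 1, N (s (m + 1))) =>
        (p.1, chainTransport E D s p.1 1 p.2))
        = (fun q : X (s 0) × N (s 1) => (q.1, D (s 1) ((E (s 0) q.1).1, q.2)))
          ∘ (Prod.map id (Function.eval (Fin.last 0))) := rfl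
    rw [hF, ← Measure.map_map hG hproj,
      ← Measure.map_prod_map _ _ measurable_id (measurable_pi_apply (Fin.last 0)),
      Measure.map_id, map_eval_pi_prob]
    rfl
  | succ L ih =>
    have hsnoc := measurePreserving_snocFun (n := L + 1)
      (α := fun j : ℕ => N (s (j + 1))) (fun j : ℕ => PN (s (j + 1)))
    have he : Measurable (fun q : (X (s 0) × (∀ m : Fin (L + 1), N (s (m + 1)))) × N (s (L + 1 + 1)) =>
        (q.1.1, (Fin.snoc q.1.2 q.2 : ∀ m : Fin (L + 1 + 1), N (s (m + 1))))) :=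
      measurable_fst.fst.prodMk (hsnoc.measurable.comp
        (measurable_fst.snd.prodMk measurable_snd))
    have h1 : Measure.map
        (fun q : (X (s 0) × (∀ m : Fin (L + 1), N (s (m + 1)))) × N (s (L + 1 + 1)) =>
          (q.1.1, (Fin.snoc q.1.2 q.2 : ∀ m : Fin (L + 1 + 1), N (s (m + 1)))))
        (((PX (s 0)).prod (Measure.pi fun m : Fin (L + 1) => PN (s (m + 1)))).prod
          (PN (s (L + 1 + 1))))
        = (PX (s 0)).prod (Measure.pi fun m : Fin (L + 1 + 1) => PN (s (m + 1))) := by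
      have hfeq : (fun q : (X (s 0) × (∀ m : Fin (L + 1), N (s (m + 1)))) × N (s (L + 1 + 1)) =>
          (q.1.1, (Fin.snoc q.1.2 q.2 : ∀ m : Fin (L + 1 + 1), N (s (m + 1)))))
          = (Prod.map (id : X (s 0) → X (s 0))
              (fun p : (∀ m : Fin (L + 1), N (s (m + 1))) × N (s (L + 1 + 1)) =>
                (Fin.snoc p.1 p.2 : ∀ m : Fin (L + 1 + 1), N (s (m + 1)))))
            ∘ (MeasurableEquiv.prodAssoc) := rfl
      rw [hfeq, ← Measure.map_map (measurable_id.prodMap hsnoc.measurable)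
        MeasurableEquiv.prodAssoc.measurable, Measure.prodAssoc_prod,
        ← Measure.map_prod_map _ _ measurable_id hsnoc.measurable, Measure.map_id, hsnoc.map_eq]
    rw [← h1, Measure.map_map (measurable_fst.prodMk (hchain (L + 1 + 1))) he]
    -- identify the composite with one more decode after the shorter chain
    have hcomp : ((fun p : X (s 0) × (∀ m : Fin (L + 1 + 1), N (s (m + 1))) =>
          (p.1, chainTransport E D s p.1 (L + 1 + 1) p.2))
        ∘ (fun q : (X (s 0) × (∀ m : Fin (L + 1), N (s (m + 1)))) × N (s (L + 1 + 1)) =>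
          (q.1.1, (Fin.snoc q.1.2 q.2 : ∀ m : Fin (L + 1 + 1), N (s (m + 1))))))
        = (fun r : (X (s 0) × X (s (L + 1))) × N (s (L + 1 + 1)) =>
            (r.1.1, D (s (L + 1 + 1)) ((E (s (L + 1)) r.1.2).1, r.2)))
          ∘ (Prod.map (fun p : X (s 0) × (∀ m : Fin (L + 1), N (s (m + 1))) =>
              (p.1, chainTransport E D s p.1 (L + 1) p.2)) id) := by
      funext q
      obtain ⟨⟨x, f⟩, a⟩ := q
      simp only [Function.comp_apply, Prod.map_apply, id_eq]
      have hres : (fun m : Fin (L + 1) =>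
          (Fin.snoc f a : ∀ m : Fin (L + 1 + 1), N (s (m + 1))) m.castSucc) = f := by
        funext m; simp
      show (x, D (s (L + 1 + 1))
          ((E (s (L + 1)) (chainTransport E D s x (L + 1)
            (fun m => (Fin.snoc f a : ∀ m : Fin (L + 1 + 1), N (s (m + 1))) m.castSucc))).1,
           (Fin.snoc f a : ∀ m : Fin (L + 1 + 1), N (s (m + 1))) (Fin.last (L + 1)))) = _
      rw [hres, Fin.snoc_last]
    have hTheta : Measurable (fun r : (X (s 0) × X (s (L + 1))) × N (s (L + 1 + 1)) =>
        (r.1.1, D (s (L + 1 + 1)) ((E (s (L + 1)) r.1.2).1, r.2))) :=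
      measurable_fst.fst.prodMk ((hD _).comp
        ((((hE _).comp measurable_fst.snd).fst).prodMk measurable_snd))
    have hdir : Measurable (fun p : X (s 0) × N (s (L + 1)) =>
        (p.1, D (s (L + 1)) ((E (s 0) p.1).1, p.2))) :=
      measurable_fst.prodMk ((hD _).comp ((((hE _).comp measurable_fst).fst).prodMk
        measurable_snd))
    rw [hcomp, ← Measure.map_map hTheta
      ((measurable_fst.prodMk (hchain (L + 1))).prodMap measurable_id),
      ← Measure.map_prod_map _ _ (measurable_fst.prodMk (hchain (L + 1))) measurable_id,
      Measure.map_id, ih]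
    have hstep : (Measure.map (fun p : X (s 0) × N (s (L + 1)) =>
          (p.1, D (s (L + 1)) ((E (s 0) p.1).1, p.2))) ((PX (s 0)).prod (PN (s (L + 1))))).prod
          (PN (s (L + 1 + 1)))
        = Measure.map (Prod.map (fun p : X (s 0) × N (s (L + 1)) =>
            (p.1, D (s (L + 1)) ((E (s 0) p.1).1, p.2))) (id : N (s (L + 1 + 1)) → N (s (L + 1 + 1))))
          (((PX (s 0)).prod (PN (s (L + 1)))).prod (PN (s (L + 1 + 1)))) := by
      rw [← Measure.map_prod_map _ _ hdir measurable_id, Measure.map_id]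
    rw [hstep, Measure.map_map hTheta (hdir.prodMap measurable_id)]
    -- a.e. identification of the roundtrip latent code
    have hg : Measure.map (fun p : X (s 0) × N (s (L + 1)) => ((E (s 0) p.1).1, p.2))
        ((PX (s 0)).prod (PN (s (L + 1)))) = PZ.prod (PN (s (L + 1))) := by
      have hfeq2 : (fun p : X (s 0) × N (s (L + 1)) => ((E (s 0) p.1).1, p.2))
          = Prod.map (fun x => (E (s 0) x).1) (id : N (s (L + 1)) → N (s (L + 1))) := rfl
      rw [hfeq2, ← Measure.map_prod_map _ _ ((hE (s 0)).fst) measurable_id, Measure.map_id,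
        latent_marginal (PX (s 0)) PZ (PN (s 0)) (E (s 0)) (hE (s 0)) (hlat (s 0))]
    have hsec := section_ae (PX (s (L + 1))) PZ (PN (s (L + 1))) (E (s (L + 1))) (D (s (L + 1)))
      (hE _) (hD _) (hrec _) (hlat _)
    rw [← hg] at hsec
    have hmeas2 : Measurable (fun p : X (s 0) × N (s (L + 1)) => ((E (s 0) p.1).1, p.2)) :=
      (((hE (s 0)).comp measurable_fst).fst).prodMk measurable_snd
    have hsetZ : MeasurableSet {p : Z × N (s (L + 1)) | (E (s (L + 1)) (D (s (L + 1)) p)).1 = p.1} :=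
      measurableSet_eq_of_standardBorel (((hE _).comp (hD _)).fst) measurable_fst
    rw [ae_map_iff hmeas2.aemeasurable hsetZ] at hsec
    have hz : ∀ᵐ p ∂((PX (s 0)).prod (PN (s (L + 1)))),
        (E (s (L + 1)) (D (s (L + 1)) ((E (s 0) p.1).1, p.2))).1 = (E (s 0) p.1).1 := hsec
    have hset : MeasurableSet {p : X (s 0) × N (s (L + 1)) |
        (E (s (L + 1)) (D (s (L + 1)) ((E (s 0) p.1).1, p.2))).1 = (E (s 0) p.1).1} :=
      measurableSet_eq_of_standardBorel
        (((hE _).comp ((hD _).comp hmeas2)).fst) (((hE (s 0)).comp measurable_fst).fst)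
    have hae2 := ae_prod_fst ((PX (s 0)).prod (PN (s (L + 1)))) (PN (s (L + 1 + 1))) hset hz
    have hcong : ((fun r : (X (s 0) × X (s (L + 1))) × N (s (L + 1 + 1)) =>
          (r.1.1, D (s (L + 1 + 1)) ((E (s (L + 1)) r.1.2).1, r.2)))
        ∘ (Prod.map (fun p : X (s 0) × N (s (L + 1)) =>
            (p.1, D (s (L + 1)) ((E (s 0) p.1).1, p.2))) (id : N (s (L + 1 + 1)) → N (s (L + 1 + 1)))))
        =ᵐ[((PX (s 0)).prod (PN (s (L + 1)))).prod (PN (s (L + 1 + 1)))]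
        (fun q : (X (s 0) × N (s (L + 1))) × N (s (L + 1 + 1)) =>
          (q.1.1, D (s (L + 1 + 1)) ((E (s 0) q.1.1).1, q.2))) := by
      filter_upwards [hae2] with q hq
      show ((q.1.1, D (s (L + 1)) ((E (s 0) q.1.1).1, q.1.2)).1,
        D (s (L + 1 + 1)) ((E (s (L + 1)) (q.1.1, D (s (L + 1)) ((E (s 0) q.1.1).1, q.1.2)).2).1,
          q.2)) = (q.1.1, D (s (L + 1 + 1)) ((E (s 0) q.1.1).1, q.2))
      simp only []
      rw [hq]
    rw [Measure.map_congr hcong]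
    have hW : Measurable (fun r : X (s 0) × N (s (L + 1 + 1)) =>
        (r.1, D (s (L + 1 + 1)) ((E (s 0) r.1).1, r.2))) :=
      measurable_fst.prodMk ((hD _).comp ((((hE _).comp measurable_fst).fst).prodMk
        measurable_snd))
    have hfinal : (fun q : (X (s 0) × N (s (L + 1))) × N (s (L + 1 + 1)) =>
          (q.1.1, D (s (L + 1 + 1)) ((E (s 0) q.1.1).1, q.2)))
        = (fun r : X (s 0) × N (s (L + 1 + 1)) =>
            (r.1, D (s (L + 1 + 1)) ((E (s 0) r.1).1, r.2)))
          ∘ (Prod.map (Prod.fst : X (s 0) × N (s (L + 1)) → X (s 0))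
              (id : N (s (L + 1 + 1)) → N (s (L + 1 + 1)))) := rfl
    rw [hfinal, ← Measure.map_map hW (measurable_fst.prodMap measurable_id),
      ← Measure.map_prod_map _ _ measurable_fst measurable_id, Measure.map_id,
      Measure.map_fst_prod, measure_univ, one_smul]
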